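/- (Uniform-coverage bound for the maximum arm radius, Lemma 15). Let m, K ≥ 1 and let c_z > 0, λ > 0, w_min > 0, p_min > 0 with λ ≥ c_z² and w_min·p_min/2 ≤ λ. For each episode t ∈ {1, …, T} let A_{t−1} be a real symmetric positive definite m × m matrix satisfying the coverage condition zᵀ A_{t−1} z ≥ (λ + (w_min·p_min/2)·(t − 1)) · ‖z‖² for all z ∈ ℝ^m, and let z_{t,1}, …, z_{t,K} ∈ ℝ^m be feature vectors with ‖z_{t,k}‖ ≤ c_z for all k. Then ∑_{t=1}^{T} min{ max_{k ∈ [K]} z_{t,k}ᵀ A_{t−1}^{-1} z_{t,k}, 1 } ≤ (4·c_z² / (w_min·p_min)) · log(1 + (w_min·p_min / (2λ)) · T), where log denotes the natural logarithm. -/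

import Mathlib

open Matrix

private lemma dot_self_nonneg {m : ℕ} (v : Fin m → ℝ) : 0 ≤ v ⬝ᵥ v :=
  Finset.sum_nonneg fun i _ => mul_self_nonneg (v i)

private lemma quad_inv_bound {m : ℕ} (A : Matrix (Fin m) (Fin m) ℝ) (hpd : A.PosDef)
    (c cz2 : ℝ) (hc : 0 < c) (hcz2 : 0 ≤ cz2)
    (hcov : ∀ zv : Fin m → ℝ, c * (zv ⬝ᵥ zv) ≤ zv ⬝ᵥ A.mulVec zv)
    (v : Fin m → ℝ) (hv : v ⬝ᵥ v ≤ cz2) :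
    v ⬝ᵥ A⁻¹.mulVec v ≤ cz2 / c := by
  set w : Fin m → ℝ := A⁻¹.mulVec v with hw
  have hAw : A.mulVec w = v := by
    rw [hw, Matrix.mulVec_mulVec, Matrix.mul_nonsing_inv _ ((Matrix.isUnit_iff_isUnit_det A).mp hpd.isUnit), Matrix.one_mulVec]
  have hcw : c * (w ⬝ᵥ w) ≤ w ⬝ᵥ v := by
    have := hcov w; rwa [hAw] at this
  have hW : 0 ≤ w ⬝ᵥ w := dot_self_nonneg w
  have ha0 : 0 ≤ w ⬝ᵥ v := le_trans (by positivity) hcw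
  have hcs : (w ⬝ᵥ v) ^ 2 ≤ (w ⬝ᵥ w) * (v ⬝ᵥ v) := by
    simpa [dotProduct, pow_two, Finset.sum_mul_sum] using
      Finset.sum_mul_sq_le_sq_mul_sq Finset.univ w v
  have hvv : 0 ≤ v ⬝ᵥ v := dot_self_nonneg v
  have key : v ⬝ᵥ w ≤ cz2 / c := by
    rw [le_div_iff₀ hc]
    rw [dotProduct_comm]
    rcases eq_or_lt_of_le ha0 with h | h
    · rw [← h, zero_mul]; exact hcz2
    · nlinarith [mul_le_mul_of_nonneg_left hv hW, mul_le_mul_of_nonneg_right hcw hvv]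
  exact key

theorem uniform_coverage_max_arm_radius
    (m K T : ℕ) (hm : 1 ≤ m) (hK : 1 ≤ K)
    (cz lam wmin pmin : ℝ)
    (hcz : 0 < cz) (hlam : cz ^ 2 ≤ lam)
    (hwmin : 0 < wmin) (hpmin : 0 < pmin)
    (hwp : wmin * pmin / 2 ≤ lam)
    (A : ℕ → Matrix (Fin m) (Fin m) ℝ)
    (hAsymm : ∀ t ∈ Finset.Icc 1 T, (A (t - 1)).IsSymm)
    (hApos : ∀ t ∈ Finset.Icc 1 T, (A (t - 1)).PosDef)
    (hcover : ∀ t ∈ Finset.Icc 1 T, ∀ zv : Fin m → ℝ,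
      (lam + wmin * pmin / 2 * ((t : ℝ) - 1)) * (zv ⬝ᵥ zv) ≤
        zv ⬝ᵥ (A (t - 1)).mulVec zv)
    (z : ℕ → Fin K → Fin m → ℝ)
    (hz : ∀ t ∈ Finset.Icc 1 T, ∀ k : Fin K, (z t k) ⬝ᵥ (z t k) ≤ cz ^ 2) :
    ∑ t ∈ Finset.Icc 1 T,
        min (⨆ k : Fin K, (z t k) ⬝ᵥ ((A (t - 1))⁻¹.mulVec (z t k))) 1 ≤
      (4 * cz ^ 2 / (wmin * pmin)) *
        Real.log (1 + wmin * pmin / (2 * lam) * (T : ℝ)) := by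
  set s : ℝ := wmin * pmin / 2 with hs
  have hs0 : 0 < s := by positivity
  have hlam0 : 0 < lam := lt_of_lt_of_le (by positivity) hlam
  set g : ℕ → ℝ := fun n => Real.log (lam + s * n) with hg
  set C : ℝ := 2 * cz ^ 2 / s with hC
  -- per-term bound
  have hterm : ∀ t ∈ Finset.Icc 1 T,
      min (⨆ k : Fin K, (z t k) ⬝ᵥ ((A (t - 1))⁻¹.mulVec (z t k))) 1 ≤
        C * (g t - g (t - 1)) := by
    intro t ht
    have ht1 : 1 ≤ t := (Finset.mem_Icc.mp ht).1
    have hcast : ((t - 1 : ℕ) : ℝ) = (t : ℝ) - 1 := by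
      push_cast [Nat.cast_sub ht1]; ring
    have htR : (1 : ℝ) ≤ (t : ℝ) := by exact_mod_cast ht1
    set c : ℝ := lam + s * ((t : ℝ) - 1) with hc
    have hc0 : 0 < c := by nlinarith
    have hb' : (0:ℝ) < lam + s * t := by nlinarith
    -- first: min ≤ cz² / c
    have h1 : min (⨆ k : Fin K, (z t k) ⬝ᵥ ((A (t - 1))⁻¹.mulVec (z t k))) 1 ≤
        cz ^ 2 / c := by
      refine le_trans (min_le_left _ _) ?_
      have : Nonempty (Fin K) := ⟨⟨0, hK⟩⟩
      refine ciSup_le fun k => ?_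
      refine quad_inv_bound (A (t-1)) (hApos t ht) c (cz ^ 2) hc0 (by positivity) ?_
        (z t k) (hz t ht k)
      intro zv
      have := hcover t ht zv
      simpa [hc, mul_comm] using this
    refine le_trans h1 ?_
    -- second: cz²/c ≤ C (g t - g (t-1))
    have hgt : g t - g (t - 1) = Real.log ((lam + s * t) / c) := by
      rw [Real.log_div hb'.ne' hc0.ne', hg]
      simp [hcast, hc]
    rw [hgt]
    have hlog : s / (lam + s * t) ≤ Real.log ((lam + s * t) / c) := by
      have h := Real.log_le_sub_one_of_pos (x := c / (lam + s * t)) (by positivity)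
      have hld : Real.log (c / (lam + s * t)) = - Real.log ((lam + s * t) / c) := by
        rw [Real.log_div hc0.ne' hb'.ne', Real.log_div hb'.ne' hc0.ne']; ring
      rw [hld] at h
      have : 1 - c / (lam + s * t) = s / (lam + s * t) := by
        field_simp; ring
      linarith [this ▸ (by linarith : 1 - c / (lam + s * t) ≤ Real.log ((lam + s * t) / c))]
    have hdouble : lam + s * t ≤ 2 * c := by
      have hsl : s ≤ lam := hwp
      nlinarith
    calc cz ^ 2 / c ≤ 2 * cz ^ 2 / (lam + s * t) := by
          rw [div_le_div_iff₀ hc0 hb']; nlinarith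
      _ ≤ C * Real.log ((lam + s * t) / c) := by
          have := mul_le_mul_of_nonneg_left hlog (by positivity : (0:ℝ) ≤ C)
          calc 2 * cz ^ 2 / (lam + s * t) = C * (s / (lam + s * t)) := by
                field_simp [hC]
                rw [hC]; field_simp
            _ ≤ C * Real.log ((lam + s * t) / c) := this
  -- sum the bounds and telescope
  have hsum : ∑ t ∈ Finset.Icc 1 T,
      min (⨆ k : Fin K, (z t k) ⬝ᵥ ((A (t - 1))⁻¹.mulVec (z t k))) 1 ≤
      C * (g T - g 0) := by
    refine le_trans (Finset.sum_le_sum hterm) ?_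
    have : ∑ t ∈ Finset.Icc 1 T, C * (g t - g (t - 1)) = C * (g T - g 0) := by
      rw [← Finset.Ico_add_one_right_eq_Icc, Finset.sum_Ico_eq_sum_range]
      simp only [Nat.succ_sub_one, Nat.add_sub_cancel, ← Finset.mul_sum]
      congr 1
      rw [Finset.sum_congr rfl (fun i _ => by
        rw [Nat.add_comm 1 i, Nat.add_sub_cancel]), Finset.sum_range_sub g T]
    linarith [this.le]
  refine le_trans hsum (le_of_eq ?_)
  have hgT : g T - g 0 = Real.log (1 + wmin * pmin / (2 * lam) * T) := by
    rw [hg]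
    simp only [Nat.cast_zero, mul_zero, add_zero]
    rw [← Real.log_div (by positivity) hlam0.ne']
    congr 1
    field_simp [hs]
    ring
  rw [hgT]
  congr 1
  rw [hC, hs]
  field_simp
  ring
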